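/- Let p be an odd prime, M, A unitaries with M^p = A^p = I and MA = ω^φ AM with φ ≠ 0 in F_p, and let V = (ω^a/√p) Σ_{k=0}^{p−1} ω^{−k(σ−a)} M^k A^{−k−1}. If |ψ⟩ satisfies A|ψ⟩ = ω^a|ψ⟩, then V|ψ⟩ = √p · P_{(M,σ)}|ψ⟩, where P_{(M,σ)} = (1/p) Σ_{k=0}^{p−1} ω^{−kσ} M^k is the projector onto the ω^σ-eigenspace of M. In particular V|ψ⟩ is a unit eigenvector of M with eigenvalue ω^σ. -/
import Mathlib


open Matrix

/-- The `p`-th root of unity `ω = e^{2πi/p}`. -/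
noncomputable def omega (p : ℕ) : ℂ := Complex.exp (2 * Real.pi * Complex.I / p)

/-- The operator `V = (ω^a/√p) Σ_{k=0}^{p−1} ω^{−k(σ−a)} M^k A^{−k−1}`,
where `A⁻¹ = A† = star A` for a unitary `A`. -/
noncomputable def Vop (p d : ℕ) (M A : Matrix (Fin d) (Fin d) ℂ) (σ a : ZMod p) :
    Matrix (Fin d) (Fin d) ℂ :=
  (omega p ^ a.val / (Real.sqrt p : ℂ)) •
    ∑ k ∈ Finset.range p,
      omega p ^ ((-(k : ZMod p) * (σ - a)).val) • (M ^ k * (star A) ^ (k + 1))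

/-- The spectral projector `P_{(M,σ)} = (1/p) Σ_{k=0}^{p−1} ω^{−kσ} M^k`. -/
noncomputable def Pproj (p d : ℕ) (M : Matrix (Fin d) (Fin d) ℂ) (σ : ZMod p) :
    Matrix (Fin d) (Fin d) ℂ :=
  (1 / (p : ℂ)) • ∑ k ∈ Finset.range p, omega p ^ ((-(k : ZMod p) * σ).val) • M ^ k

open Finset

section aux
variable {p : ℕ} [Fact p.Prime]

lemma omega_prim : IsPrimitiveRoot (omega p) p := by
  have : (p : ℕ) ≠ 0 := (Fact.out : p.Prime).ne_zero
  simpa [omega] using Complex.isPrimitiveRoot_exp p this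

lemma omega_pow_p : omega p ^ p = 1 := omega_prim.pow_eq_one

lemma ppos : 0 < p := (Fact.out : p.Prime).pos

/-- generic: if g^p = 1 then g^((n : ZMod p).val) = g^n -/
lemma pow_natCast_val {G : Type*} [Monoid G] (g : G) (hg : g ^ p = 1) (n : ℕ) :
    g ^ ((n : ZMod p)).val = g ^ n := by
  have : (p:ℕ) ≠ 0 := ppos.ne'
  rw [ZMod.val_natCast]
  conv_rhs => rw [← Nat.div_add_mod n p, pow_add, pow_mul, hg, one_pow, one_mul]

lemma pow_val_add {G : Type*} [Monoid G] (g : G) (hg : g ^ p = 1) (x y : ZMod p) :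
    g ^ ((x + y).val) = g ^ x.val * g ^ y.val := by
  have hx : ((x.val + y.val : ℕ) : ZMod p) = x + y := by push_cast [ZMod.natCast_val, ZMod.cast_id]; ring
  rw [← hx, pow_natCast_val g hg, pow_add]

lemma sum_range_zmod {β : Type*} [AddCommMonoid β] (f : ZMod p → β) :
    ∑ k ∈ Finset.range p, f (k : ZMod p) = ∑ t : ZMod p, f t := by
  have : NeZero p := ⟨ppos.ne'⟩
  refine Finset.sum_nbij' (fun k => (k : ZMod p)) (fun t => t.val) ?_ ?_ ?_ ?_ ?_
  · intros; exact Finset.mem_univ _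
  · intro t _; exact Finset.mem_range.mpr (ZMod.val_lt t)
  · intro k hk; exact ZMod.val_natCast_of_lt (Finset.mem_range.mp hk)
  · intro t _; exact ZMod.natCast_rightInverse t
  · intros; rfl

lemma sum_zeta_eq_zero (c : ZMod p) (hc : c ≠ 0) :
    ∑ t : ZMod p, omega p ^ ((c * t).val) = 0 := by
  have : NeZero p := ⟨ppos.ne'⟩
  have h1 : ∑ t : ZMod p, omega p ^ ((c * t).val) = ∑ t : ZMod p, omega p ^ t.val :=
    Fintype.sum_bijective (fun t => c * t) (Equiv.mulLeft₀ c hc).bijective _ _ (fun t => rfl)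
  have h2 : ∑ t : ZMod p, omega p ^ t.val = ∑ k ∈ Finset.range p, omega p ^ k := by
    rw [← sum_range_zmod (fun t : ZMod p => omega p ^ t.val)]
    exact Finset.sum_congr rfl fun k hk => by rw [ZMod.val_natCast_of_lt (Finset.mem_range.mp hk)]
  rw [h1, h2]
  exact omega_prim.geom_sum_eq_zero (Fact.out : p.Prime).one_lt
end aux

section mats
variable {p d : ℕ} [Fact p.Prime] (M A : Matrix (Fin d) (Fin d) ℂ)

/-- `ζ x = ω ^ x.val` -/
noncomputable def zeta (p : ℕ) (x : ZMod p) : ℂ := omega p ^ x.val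

lemma zeta_add (x y : ZMod p) : zeta p (x + y) = zeta p x * zeta p y :=
  pow_val_add _ omega_pow_p x y

lemma zeta_zero : zeta p (0 : ZMod p) = 1 := by
  have : NeZero p := ⟨ppos.ne'⟩
  simp [zeta, ZMod.val_zero]

lemma zeta_natCast (n : ℕ) : zeta p (n : ZMod p) = omega p ^ n :=
  pow_natCast_val _ omega_pow_p n

lemma zeta_mul_neg (x : ZMod p) : zeta p x * zeta p (-x) = 1 := by
  rw [← zeta_add]; simp [zeta_zero]

lemma zeta_pow (x : ZMod p) (n : ℕ) : zeta p x ^ n = zeta p ((n : ZMod p) * x) := by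
  induction n with
  | zero => simp [zeta_zero]
  | succ n ih => rw [pow_succ, ih, ← zeta_add]; push_cast; ring_nf

lemma norm_omega : ‖omega p‖ = 1 := by
  have h : ‖omega p‖ ^ p = 1 := by
    rw [← norm_pow, omega_pow_p, norm_one]
  rcases lt_trichotomy ‖omega p‖ 1 with hlt | heq | hgt
  · have := pow_lt_one₀ (norm_nonneg (omega p)) hlt (ppos (p:=p)).ne'
    linarith
  · exact heq
  · have := one_lt_pow₀ hgt (ppos (p:=p)).ne'
    linarith

lemma norm_zeta (x : ZMod p) : ‖zeta p x‖ = 1 := by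
  rw [zeta, norm_pow, norm_omega, one_pow]

lemma conj_zeta (x : ZMod p) : (starRingEnd ℂ) (zeta p x) = zeta p (-x) := by
  rw [← Complex.inv_eq_conj (norm_zeta x)]
  exact (eq_inv_of_mul_eq_one_left (by rw [mul_comm]; exact zeta_mul_neg x)).symm

/-- `mpow k = M ^ k.val` -/
noncomputable def mpow (k : ZMod p) : Matrix (Fin d) (Fin d) ℂ := M ^ k.val

lemma mpow_natCast (hMp : M ^ p = 1) (n : ℕ) : mpow M (n : ZMod p) = M ^ n :=
  pow_natCast_val _ hMp n

lemma mpow_add (hMp : M ^ p = 1) (x y : ZMod p) : mpow M (x + y) = mpow M x * mpow M y :=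
  pow_val_add _ hMp x y

lemma mpow_zero : mpow M (0 : ZMod p) = 1 := by
  have : NeZero p := ⟨ppos.ne'⟩
  simp [mpow, ZMod.val_zero]

lemma mpow_one (hMp : M ^ p = 1) : mpow M (1 : ZMod p) = M := by
  have h1 : ((1:ℕ) : ZMod p) = 1 := by push_cast; rfl
  rw [← h1, mpow_natCast M hMp, pow_one]

lemma mpow_pow (hMp : M ^ p = 1) (x : ZMod p) (n : ℕ) :
    mpow M x ^ n = mpow M ((n : ZMod p) * x) := by
  induction n with
  | zero => simp [mpow_zero M]
  | succ n ih => rw [pow_succ, ih, ← mpow_add M hMp]; push_cast; ring_nf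

lemma star_eq_mpow_neg_one (hMp : M ^ p = 1) (hM : M ∈ Matrix.unitaryGroup (Fin d) ℂ) :
    star M = mpow M (-1 : ZMod p) := by
  have h1 : mpow M (-1 : ZMod p) * M = 1 := by
    have h := mpow_add M hMp (-1 : ZMod p) 1
    rw [mpow_one M hMp] at h
    rw [← h]; simp [mpow_zero M]
  have h2 : M * star M = 1 := hM.2
  calc star M = 1 * star M := (one_mul _).symm
    _ = mpow M (-1 : ZMod p) * (M * star M) := by rw [← h1, mul_assoc]
    _ = mpow M (-1 : ZMod p) := by rw [h2, mul_one]

lemma star_mpow (hMp : M ^ p = 1) (hM : M ∈ Matrix.unitaryGroup (Fin d) ℂ) (k : ZMod p) :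
    star (mpow M k) = mpow M (-k) := by
  have : NeZero p := ⟨ppos.ne'⟩
  rw [mpow, star_pow, star_eq_mpow_neg_one M hMp hM, mpow_pow M hMp,
    ZMod.natCast_val, ZMod.cast_id]
  ring_nf

end mats

section sop
variable {p d : ℕ} [Fact p.Prime] (M A : Matrix (Fin d) (Fin d) ℂ)

/-- unnormalized spectral sum over `ZMod p` -/
noncomputable def Sop (t : ZMod p) : Matrix (Fin d) (Fin d) ℂ :=
  ∑ k : ZMod p, zeta p (-k * t) • mpow M k

lemma mul_mpow (hMp : M ^ p = 1) (k : ZMod p) : M * mpow M k = mpow M (1 + k) := by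
  rw [mpow_add M hMp, mpow_one M hMp]

lemma Pproj_eq (hMp : M ^ p = 1) (t : ZMod p) :
    (1 / (p : ℂ)) • ∑ k ∈ Finset.range p, omega p ^ ((-(k : ZMod p) * t).val) • M ^ k
      = (1 / (p : ℂ)) • Sop M t := by
  congr 1
  rw [Sop, ← sum_range_zmod (fun k : ZMod p => zeta p (-k * t) • mpow M k)]
  refine Finset.sum_congr rfl fun k hk => ?_
  rw [mpow_natCast M hMp]
  rfl

lemma mul_Sop (hMp : M ^ p = 1) (t : ZMod p) :
    M * Sop M t = zeta p t • Sop M t := by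
  rw [Sop, Finset.mul_sum, Finset.smul_sum]
  have key : ∀ k : ZMod p, M * (zeta p (-k * t) • mpow M k)
      = zeta p (-(1 + k) * t + t) • mpow M (1 + k) := by
    intro k
    rw [mul_smul_comm, mul_mpow M hMp]
    congr 2
    ring
  simp_rw [key]
  refine Fintype.sum_equiv (Equiv.addLeft (1 : ZMod p))
    (fun k => zeta p (-(1 + k) * t + t) • mpow M (1 + k))
    (fun j => zeta p t • zeta p (-j * t) • mpow M j) (fun k => ?_)
  simp only [Equiv.coe_addLeft]
  rw [smul_smul, ← zeta_add]
  congr 2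
  ring

lemma Sop_mul_Sop (hMp : M ^ p = 1) (t : ZMod p) :
    Sop M t * Sop M t = (p : ℂ) • Sop M t := by
  have key : ∀ k : ZMod p, (zeta p (-k * t) • mpow M k) * Sop M t = Sop M t := by
    intro k
    rw [smul_mul_assoc]
    nth_rewrite 1 [Sop]
    rw [Finset.mul_sum, Finset.smul_sum]
    have h1 : ∀ l : ZMod p, zeta p (-k * t) • (mpow M k * (zeta p (-l * t) • mpow M l))
        = zeta p (-(k + l) * t) • mpow M (k + l) := by
      intro l
      rw [mul_smul_comm, smul_smul, ← zeta_add, ← mpow_add M hMp]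
      congr 2
      ring
    simp_rw [h1]
    exact Fintype.sum_equiv (Equiv.addLeft k)
      (fun l => zeta p (-(k + l) * t) • mpow M (k + l))
      (fun m => zeta p (-m * t) • mpow M m) (fun l => rfl)
  nth_rewrite 1 [Sop]
  rw [Finset.sum_mul]
  simp_rw [key]
  rw [Finset.sum_const, Finset.card_univ, ZMod.card, Nat.cast_smul_eq_nsmul]

lemma star_Sop (hMp : M ^ p = 1) (hM : M ∈ Matrix.unitaryGroup (Fin d) ℂ) (t : ZMod p) :
    star (Sop M t) = Sop M t := by
  rw [Sop, star_sum]
  have key : ∀ k : ZMod p, star (zeta p (-k * t) • mpow M k)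
      = zeta p (-(-k) * t) • mpow M (-k) := by
    intro k
    rw [star_smul, star_mpow M hMp hM, Complex.star_def, conj_zeta]
    congr 2
    ring
  calc ∑ k : ZMod p, star (zeta p (-k * t) • mpow M k)
      = ∑ k : ZMod p, zeta p (-(-k) * t) • mpow M (-k) := Finset.sum_congr rfl fun k _ => key k
    _ = Sop M t := by
        rw [Sop]
        exact Fintype.sum_equiv (Equiv.neg (ZMod p))
          (fun k => zeta p (-(-k) * t) • mpow M (-k))
          (fun m => zeta p (-m * t) • mpow M m) (fun k => rfl)

lemma sum_Sop (hMp : M ^ p = 1) : ∑ t : ZMod p, Sop M t = (p : ℂ) • 1 := by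
  simp only [Sop]
  rw [Finset.sum_comm]
  have key : ∀ k : ZMod p, ∑ t : ZMod p, zeta p (-k * t) • mpow M k
      = (∑ t : ZMod p, zeta p (-k * t)) • mpow M k := by
    intro k; rw [Finset.sum_smul]
  simp_rw [key]
  rw [Finset.sum_eq_single (0 : ZMod p)]
  · have h0 : ∑ t : ZMod p, zeta p (-(0:ZMod p) * t) = (p : ℂ) := by
      have : ∀ t : ZMod p, zeta p (-(0:ZMod p) * t) = 1 := by
        intro t; rw [show -(0:ZMod p) * t = 0 by ring, zeta_zero]
      simp_rw [this]
      rw [Finset.sum_const, Finset.card_univ, ZMod.card, nsmul_eq_mul, mul_one]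
    rw [h0, mpow_zero M]
  · intro k _ hk
    have h : ∀ t : ZMod p, -k * t = k * (-t) := fun t => by ring
    have : ∑ t : ZMod p, zeta p (-k * t) = 0 := by
      simp_rw [h]
      exact Fintype.sum_equiv (Equiv.neg (ZMod p))
        (fun t => zeta p (k * (-t))) (fun t => zeta p (k * t)) (fun t => by simp) |>.trans
        (sum_zeta_eq_zero k hk)
    rw [this, zero_smul]
  · intro h; exact absurd (Finset.mem_univ _) h

end sop

section comm
variable {p d : ℕ} [Fact p.Prime] (M A : Matrix (Fin d) (Fin d) ℂ)

lemma comm_pow_nat (φ : ZMod p) (hcomm : M * A = omega p ^ φ.val • (A * M)) (n : ℕ) :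
    M ^ n * A = (omega p ^ φ.val) ^ n • (A * M ^ n) := by
  induction n with
  | zero => simp
  | succ n ih =>
    rw [pow_succ, mul_assoc, hcomm, mul_smul_comm, ← mul_assoc, ih, smul_mul_assoc, smul_smul,
      mul_assoc, ← pow_succ]
    congr 1
    ring

lemma mpow_mul_A (φ : ZMod p) (hcomm : M * A = omega p ^ φ.val • (A * M)) (k : ZMod p) :
    mpow M k * A = zeta p (k * φ) • (A * mpow M k) := by
  have : NeZero p := ⟨ppos.ne'⟩
  rw [mpow, comm_pow_nat M A φ hcomm k.val]
  congr 1
  rw [show (omega p ^ φ.val) = zeta p φ from rfl, zeta_pow, ZMod.natCast_val, ZMod.cast_id]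

lemma Sop_mul_A (hMp : M ^ p = 1) (φ : ZMod p)
    (hcomm : M * A = omega p ^ φ.val • (A * M)) (t : ZMod p) :
    Sop M t * A = A * Sop M (t - φ) := by
  simp only [Sop, Finset.sum_mul, Finset.mul_sum]
  refine Finset.sum_congr rfl fun k _ => ?_
  rw [smul_mul_assoc, mpow_mul_A M A φ hcomm k, mul_smul_comm, smul_smul, ← zeta_add]
  congr 2
  ring

end comm

section ip
variable {d : ℕ}

lemma ipd_self (v : Fin d → ℂ) : star v ⬝ᵥ v = ((∑ i, ‖v i‖ ^ 2 : ℝ) : ℂ) := by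
  rw [dotProduct]
  push_cast
  refine Finset.sum_congr rfl fun i _ => ?_
  rw [Pi.star_apply, Complex.star_def, mul_comm, Complex.mul_conj']

lemma ip_mulVec (B : Matrix (Fin d) (Fin d) ℂ) (x y : Fin d → ℂ) :
    star (B *ᵥ x) ⬝ᵥ y = star x ⬝ᵥ (star B *ᵥ y) := by
  rw [Matrix.star_mulVec, ← Matrix.dotProduct_mulVec, Matrix.star_eq_conjTranspose]

lemma sum_sq_norm_mulVec_unitary (A : Matrix (Fin d) (Fin d) ℂ)
    (hA : A ∈ Matrix.unitaryGroup (Fin d) ℂ) (v : Fin d → ℂ) :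
    ∑ i, ‖(A *ᵥ v) i‖ ^ 2 = ∑ i, ‖v i‖ ^ 2 := by
  have h : star (A *ᵥ v) ⬝ᵥ (A *ᵥ v) = star v ⬝ᵥ v := by
    rw [ip_mulVec, Matrix.mulVec_mulVec, hA.1, Matrix.one_mulVec]
  rw [ipd_self, ipd_self] at h
  exact_mod_cast h

lemma sum_sq_norm_smul (c : ℂ) (v : Fin d → ℂ) :
    ∑ i, ‖(c • v) i‖ ^ 2 = ‖c‖ ^ 2 * ∑ i, ‖v i‖ ^ 2 := by
  simp [norm_smul, mul_pow, Finset.mul_sum]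

lemma sum_mulVec {ι : Type*} (s : Finset ι) (f : ι → Matrix (Fin d) (Fin d) ℂ)
    (v : Fin d → ℂ) : (∑ k ∈ s, f k) *ᵥ v = ∑ k ∈ s, f k *ᵥ v :=
  map_sum (Matrix.mulVec.addMonoidHomLeft v) f s

lemma pow_mulVec_eig (B : Matrix (Fin d) (Fin d) ℂ) (v : Fin d → ℂ) (c : ℂ)
    (h : B *ᵥ v = c • v) (n : ℕ) : (B ^ n) *ᵥ v = c ^ n • v := by
  induction n with
  | zero => simp
  | succ n ih =>
    rw [pow_succ, ← Matrix.mulVec_mulVec, h, Matrix.mulVec_smul, ih, smul_smul, pow_succ']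

end ip

lemma dotProduct_sum' {d : ℕ} {ι : Type*} (v : Fin d → ℂ) (s : Finset ι) (f : ι → Fin d → ℂ) :
    v ⬝ᵥ (∑ k ∈ s, f k) = ∑ k ∈ s, v ⬝ᵥ f k := by
  simp only [dotProduct, Finset.sum_apply, Finset.mul_sum]
  rw [Finset.sum_comm]

lemma const_of_shift {p : ℕ} [Fact p.Prime] (g : ZMod p → ℝ) (φ : ZMod p) (hφ : φ ≠ 0)
    (h : ∀ t, g t = g (t - φ)) (t s : ZMod p) : g t = g s := by
  have : NeZero p := ⟨ppos.ne'⟩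
  have key : ∀ n : ℕ, ∀ u : ZMod p, g (u - (n : ZMod p) * φ) = g u := by
    intro n
    induction n with
    | zero => intro u; simp
    | succ n ih =>
      intro u
      have e : u - ((n + 1 : ℕ) : ZMod p) * φ = (u - φ) - (n : ZMod p) * φ := by
        push_cast; ring
      rw [e, ih (u - φ), ← h u]
  have e2 : t - ((((t - s) * φ⁻¹).val : ℕ) : ZMod p) * φ = s := by
    rw [ZMod.natCast_val, ZMod.cast_id, mul_assoc, inv_mul_cancel₀ hφ, mul_one]
    ring
  calc g t = g (t - ((((t - s) * φ⁻¹).val : ℕ) : ZMod p) * φ) := (key _ t).symm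
    _ = g s := by rw [e2]



section main
variable {p d : ℕ} [Fact p.Prime]

lemma sqrtp_pos : (0:ℝ) < Real.sqrt p := Real.sqrt_pos.mpr (by exact_mod_cast ppos (p := p))

lemma sqrtp_ne : (Real.sqrt p : ℂ) ≠ 0 := by
  simp only [ne_eq, Complex.ofReal_eq_zero]
  exact (sqrtp_pos (p := p)).ne'

lemma sqrtp_sq : (Real.sqrt p : ℂ) * (Real.sqrt p : ℂ) = (p : ℂ) := by
  rw [← Complex.ofReal_mul, Real.mul_self_sqrt (Nat.cast_nonneg p)]
  norm_cast

lemma pC_ne : ((p : ℂ)) ≠ 0 := Nat.cast_ne_zero.mpr (ppos (p := p)).ne'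

lemma hV_lemma (M A : Matrix (Fin d) (Fin d) ℂ)
    (hA : A ∈ Matrix.unitaryGroup (Fin d) ℂ)
    (σ a : ZMod p) (ψ : Fin d → ℂ)
    (heig : A.mulVec ψ = omega p ^ a.val • ψ) :
    ((omega p ^ a.val / (Real.sqrt p : ℂ)) •
      ∑ k ∈ Finset.range p,
        omega p ^ ((-(k : ZMod p) * (σ - a)).val) • (M ^ k * (star A) ^ (k + 1))) *ᵥ ψ
      = (Real.sqrt p : ℂ)⁻¹ •
        ∑ k ∈ Finset.range p, zeta p (-(k : ZMod p) * σ) • (M ^ k *ᵥ ψ) := by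
  have : NeZero p := ⟨ppos.ne'⟩
  have hstarA : (star A) *ᵥ ψ = zeta p (-a) • ψ := by
    have h1 : (star A) *ᵥ (A *ᵥ ψ) = ψ := by
      rw [Matrix.mulVec_mulVec, hA.1, Matrix.one_mulVec]
    rw [heig, Matrix.mulVec_smul] at h1
    have h2 : zeta p a • ((star A) *ᵥ ψ) = ψ := h1
    calc (star A) *ᵥ ψ = (zeta p (-a) * zeta p a) • ((star A) *ᵥ ψ) := by
          rw [mul_comm, zeta_mul_neg, one_smul]
      _ = zeta p (-a) • (zeta p a • ((star A) *ᵥ ψ)) := by rw [smul_smul]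
      _ = zeta p (-a) • ψ := by rw [h2]
  rw [Matrix.smul_mulVec, sum_mulVec, Finset.smul_sum, Finset.smul_sum]
  refine Finset.sum_congr rfl fun k hk => ?_
  rw [Matrix.smul_mulVec, ← Matrix.mulVec_mulVec,
    pow_mulVec_eig (star A) ψ (zeta p (-a)) hstarA (k + 1),
    Matrix.mulVec_smul, smul_smul, smul_smul, smul_smul]
  congr 1
  have e1 : omega p ^ ((-(k : ZMod p) * (σ - a)).val) = zeta p (-(k : ZMod p) * (σ - a)) := rfl
  have e2 : omega p ^ a.val = zeta p a := rfl
  rw [e1, e2, zeta_pow, div_eq_mul_inv, mul_comm (zeta p a)]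
  rw [mul_assoc, mul_assoc, ← zeta_add, ← zeta_add]
  congr 2
  push_cast
  ring

end main

/-- if `A|ψ⟩ = ω^a|ψ⟩` then `V|ψ⟩ = √p · P_{(M,σ)}|ψ⟩`; in particular
`V|ψ⟩` is a unit eigenvector of `M` with eigenvalue `ω^σ`. -/
theorem stmt6 (p d : ℕ) [Fact p.Prime] (hodd : Odd p)
    (M A : Matrix (Fin d) (Fin d) ℂ)
    (hM : M ∈ Matrix.unitaryGroup (Fin d) ℂ)
    (hA : A ∈ Matrix.unitaryGroup (Fin d) ℂ)
    (hMp : M ^ p = 1) (hAp : A ^ p = 1)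
    (φ : ZMod p) (hφ : φ ≠ 0)
    (hcomm : M * A = omega p ^ φ.val • (A * M))
    (σ a : ZMod p)
    (ψ : Fin d → ℂ) (hunit : ∑ i, ‖ψ i‖ ^ 2 = 1)
    (heig : A.mulVec ψ = omega p ^ a.val • ψ) :
    (Vop p d M A σ a).mulVec ψ = (Real.sqrt p : ℂ) • (Pproj p d M σ).mulVec ψ ∧
    M.mulVec ((Vop p d M A σ a).mulVec ψ) =
      omega p ^ σ.val • (Vop p d M A σ a).mulVec ψ ∧
    ∑ i, ‖(Vop p d M A σ a).mulVec ψ i‖ ^ 2 = 1 := by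
  have hnz : NeZero p := ⟨ppos.ne'⟩
  have hpR : ((p : ℝ)) ≠ 0 := Nat.cast_ne_zero.mpr (ppos (p := p)).ne'
  have hV : (Vop p d M A σ a).mulVec ψ = (Real.sqrt p : ℂ)⁻¹ •
      ∑ k ∈ Finset.range p, zeta p (-(k : ZMod p) * σ) • (M ^ k *ᵥ ψ) := by
    rw [Vop]
    exact hV_lemma M A hA σ a ψ heig
  have hPS : Pproj p d M σ = (1/(p:ℂ)) • Sop M σ := by
    rw [Pproj]
    exact Pproj_eq M hMp σ
  have hP : (Pproj p d M σ).mulVec ψ = (p : ℂ)⁻¹ •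
      ∑ k ∈ Finset.range p, zeta p (-(k : ZMod p) * σ) • (M ^ k *ᵥ ψ) := by
    rw [Pproj, Matrix.smul_mulVec, sum_mulVec, one_div]
    congr 1
    refine Finset.sum_congr rfl fun k hk => ?_
    rw [Matrix.smul_mulVec]
    rfl
  have part1 : (Vop p d M A σ a).mulVec ψ = (Real.sqrt p : ℂ) • (Pproj p d M σ).mulVec ψ := by
    rw [hV, hP, smul_smul]
    congr 1
    rw [← sqrtp_sq (p := p), mul_inv, ← mul_assoc, mul_inv_cancel₀ (sqrtp_ne (p := p)), one_mul]
  refine ⟨part1, ?_, ?_⟩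
  · -- eigenvector property
    have hMulP : M * Pproj p d M σ = zeta p σ • Pproj p d M σ := by
      rw [hPS, mul_smul_comm, mul_Sop M hMp, smul_comm]
    rw [part1, Matrix.mulVec_smul, Matrix.mulVec_mulVec, hMulP, Matrix.smul_mulVec,
      smul_smul, smul_smul, mul_comm]
    rfl
  · -- unit norm
    set g : ZMod p → ℝ := fun t => ∑ i, ‖(((1/(p:ℂ)) • Sop M t) *ᵥ ψ) i‖ ^ 2 with hg
    have hproj : ∀ t : ZMod p, ((1/(p:ℂ)) • Sop M t) * ((1/(p:ℂ)) • Sop M t)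
        = (1/(p:ℂ)) • Sop M t := by
      intro t
      rw [smul_mul_assoc, mul_smul_comm, Sop_mul_Sop M hMp, smul_smul, smul_smul]
      congr 1
      field_simp
    have hstarP : ∀ t : ZMod p, star ((1/(p:ℂ)) • Sop M t) = (1/(p:ℂ)) • Sop M t := by
      intro t
      rw [star_smul, star_Sop M hMp hM]
      congr 1
      simp [Complex.star_def]
    have hsc : ∀ t : ZMod p, ((g t : ℝ) : ℂ) = star ψ ⬝ᵥ (((1/(p:ℂ)) • Sop M t) *ᵥ ψ) := by
      intro t
      rw [hg]
      simp only
      rw [← ipd_self, ip_mulVec, hstarP t, Matrix.mulVec_mulVec, hproj t]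
    have hsumf : ∑ t : ZMod p, g t = 1 := by
      have h1 : ∑ t : ZMod p, ((g t : ℝ) : ℂ) = 1 := by
        rw [Finset.sum_congr rfl (fun t _ => hsc t), ← dotProduct_sum']
        have h3 : ∑ t : ZMod p, (1/(p:ℂ)) • Sop M t = 1 := by
          rw [← Finset.smul_sum, sum_Sop M hMp, smul_smul, one_div,
            inv_mul_cancel₀ (pC_ne (p := p)), one_smul]
        rw [← sum_mulVec, h3, Matrix.one_mulVec, ipd_self, hunit]
        norm_cast
      exact_mod_cast h1
    have hshift : ∀ t : ZMod p, g t = g (t - φ) := by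
      intro t
      have hψeq : ψ = zeta p (-a) • (A *ᵥ ψ) := by
        rw [heig]
        have e2 : omega p ^ a.val = zeta p a := rfl
        rw [e2, smul_smul, mul_comm, zeta_mul_neg, one_smul]
      have key : ((1/(p:ℂ)) • Sop M t) *ᵥ ψ
          = zeta p (-a) • (A *ᵥ (((1/(p:ℂ)) • Sop M (t - φ)) *ᵥ ψ)) := by
        conv_lhs => rw [hψeq]
        rw [Matrix.mulVec_smul, Matrix.mulVec_mulVec]
        have hPA : ((1/(p:ℂ)) • Sop M t) * A = A * ((1/(p:ℂ)) • Sop M (t - φ)) := by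
          rw [smul_mul_assoc, Sop_mul_A M A hMp φ hcomm t, mul_smul_comm]
        rw [hPA, ← Matrix.mulVec_mulVec]
      rw [hg]
      simp only
      rw [key, sum_sq_norm_smul, norm_zeta, one_pow, one_mul,
        sum_sq_norm_mulVec_unitary A hA]
    have hall : ∀ t : ZMod p, g t = g σ :=
      fun t => const_of_shift g φ hφ hshift t σ
    have hsum2 : ∑ t : ZMod p, g t = (p : ℝ) * g σ := by
      rw [Finset.sum_congr rfl (fun t _ => hall t), Finset.sum_const, Finset.card_univ,
        ZMod.card, nsmul_eq_mul]
    have hgσ : g σ = 1 / p := by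
      rw [hsumf] at hsum2
      field_simp
      linarith [hsum2]
    rw [part1, hPS]
    have hrw : ∑ i, ‖((Real.sqrt p : ℂ) • (((1/(p:ℂ)) • Sop M σ) *ᵥ ψ)) i‖ ^ 2
        = ‖(Real.sqrt p : ℂ)‖ ^ 2 * g σ := sum_sq_norm_smul _ _
    have hsm : ((1/(p:ℂ)) • Sop M σ) *ᵥ ψ = (Pproj p d M σ) *ᵥ ψ := by rw [hPS]
    calc ∑ i, ‖((Real.sqrt p : ℂ) • (((1/(p:ℂ)) • Sop M σ) *ᵥ ψ)) i‖ ^ 2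
        = ‖(Real.sqrt p : ℂ)‖ ^ 2 * g σ := hrw
      _ = 1 := by
          rw [hgσ, Complex.norm_real, Real.norm_eq_abs,
            abs_of_nonneg (Real.sqrt_nonneg _), Real.sq_sqrt (Nat.cast_nonneg p)]
          field_simp
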